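/- If A and B are input types, then the product type A ∧ B = ∀X((A → (B → X)) → X), the disjoint sum type A ∨ B = ∀X((A → X) → ((B → X) → X)), and the list type LA = ∀X(X → ((A → (X → X)) → X)) are input types. -/

import Mathlib

/-!
Common development: pure λ-calculus in de Bruijn notation, β-reduction,
weak head reduction, types of system F (with type constants), the typing
systems F, F₀ (F without (∀e)) and the simple system S, saturated sets and
interpretations, and the notions of input / output / data types, following
Farkh-Nour, "Les types de données syntaxiques du système F".
-/

namespace FarkhNour

/-- Pure λ-terms, in de Bruijn notation. -/
inductive Trm : Type
  | var : ℕ → Trm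
  | app : Trm → Trm → Trm
  | lam : Trm → Trm

/-- Lift (shift) by `d` the free variables of a term, starting at index `k`. -/
def liftTrm (d : ℕ) : ℕ → Trm → Trm
  | k, .var n => if n < k then .var n else .var (n + d)
  | k, .app a b => .app (liftTrm d k a) (liftTrm d k b)
  | k, .lam a => .lam (liftTrm d (k + 1) a)

/-- β-substitution `t[u/k]` (the binder for `k` is consumed: variables above `k`
are decremented), as used in the β-reduction rule. -/
def substTrm : Trm → ℕ → Trm → Trm
  | .var n, k, u => if n < k then .var n else if n = k then liftTrm k 0 u else .var (n - 1)
  | .app a b, k, u => .app (substTrm a k u) (substTrm b k u)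
  | .lam a, k, u => .lam (substTrm a (k + 1) u)

/-- Named-style capture-avoiding substitution `t[u/x]` of the term `u` for the
free variable `x` of `t` : the other free variables are left unchanged. -/
def replaceVar : Trm → ℕ → Trm → Trm
  | .var n, k, u => if n = k then u else .var n
  | .app a b, k, u => .app (replaceVar a k u) (replaceVar b k u)
  | .lam a, k, u => .lam (replaceVar a (k + 1) (liftTrm 1 0 u))

/-- Lifting of a parallel substitution under a binder. -/
def liftSub (σ : ℕ → Trm) : ℕ → Trm
  | 0 => .var 0
  | n + 1 => liftTrm 1 0 (σ n)

/-- Simultaneous (parallel) capture-avoiding substitution. -/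
def msubst (σ : ℕ → Trm) : Trm → Trm
  | .var n => σ n
  | .app a b => .app (msubst σ a) (msubst σ b)
  | .lam a => .lam (msubst (liftSub σ) a)

/-- One step of β-reduction. -/
inductive BetaStep : Trm → Trm → Prop
  | beta (t u : Trm) : BetaStep (.app (.lam t) u) (substTrm t 0 u)
  | appL {t t' : Trm} (u : Trm) : BetaStep t t' → BetaStep (.app t u) (.app t' u)
  | appR (t : Trm) {u u' : Trm} : BetaStep u u' → BetaStep (.app t u) (.app t u')
  | lam {t t' : Trm} : BetaStep t t' → BetaStep (.lam t) (.lam t')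

/-- Many-step β-reduction `t →β t'`. -/
def BetaRed : Trm → Trm → Prop := Relation.ReflTransGen BetaStep

/-- β-equivalence `t ≃β t'`. -/
def BetaEq : Trm → Trm → Prop := Relation.EqvGen BetaStep

/-- A term is normal iff no β-reduction step applies to it. -/
def IsNormal (t : Trm) : Prop := ∀ u, ¬ BetaStep t u

/-- `FreeIn k t` : the variable (de Bruijn index) `k` occurs free in `t`. -/
def FreeIn : ℕ → Trm → Prop
  | k, .var n => n = k
  | k, .app a b => FreeIn k a ∨ FreeIn k b
  | k, .lam a => FreeIn (k + 1) a

/-- A closed term. -/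
def TrmClosed (t : Trm) : Prop := ∀ k, ¬ FreeIn k t

/-- One step of weak head reduction. -/
inductive WHStep : Trm → Trm → Prop
  | beta (t u : Trm) : WHStep (.app (.lam t) u) (substTrm t 0 u)
  | app {t t' : Trm} (u : Trm) : WHStep t t' → WHStep (.app t u) (.app t' u)

/-- Weak head reduction `t ≻_f t'`. -/
def WHRed : Trm → Trm → Prop := Relation.ReflTransGen WHStep

/-- Types of system F, in de Bruijn notation, with type constants
(the constant `0` is the distinguished constant `O`, the constant `1` is `⊥`). -/
inductive Ty : Type
  | var : ℕ → Ty
  | const : ℕ → Ty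
  | arr : Ty → Ty → Ty
  | all : Ty → Ty

/-- The distinguished type constant `O`. -/
def tyO : Ty := .const 0

/-- The distinguished type constant `⊥`. -/
def tyBot : Ty := .const 1

/-- Lift (shift) by `d` the free type variables, starting at index `k`. -/
def liftTy (d : ℕ) : ℕ → Ty → Ty
  | k, .var n => if n < k then .var n else .var (n + d)
  | _, .const c => .const c
  | k, .arr a b => .arr (liftTy d k a) (liftTy d k b)
  | k, .all a => .all (liftTy d (k + 1) a)

/-- Capture-avoiding type substitution `A[G/k]`. -/
def substTy : Ty → ℕ → Ty → Ty
  | .var n, k, G => if n < k then .var n else if n = k then liftTy k 0 G else .var (n - 1)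
  | .const c, _, _ => .const c
  | .arr a b, k, G => .arr (substTy a k G) (substTy b k G)
  | .all a, k, G => .all (substTy a (k + 1) G)

/-- `TyFreeIn k A` : the type variable `k` occurs free in `A`. -/
def TyFreeIn : ℕ → Ty → Prop
  | k, .var n => n = k
  | _, .const _ => False
  | k, .arr a b => TyFreeIn k a ∨ TyFreeIn k b
  | k, .all a => TyFreeIn (k + 1) a

/-- Boolean version of `TyFreeIn`. -/
def tyFreeInB : ℕ → Ty → Bool
  | k, .var n => n == k
  | _, .const _ => false
  | k, .arr a b => tyFreeInB k a || tyFreeInB k b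
  | k, .all a => tyFreeInB (k + 1) a

/-- A closed type. -/
def TyClosed (A : Ty) : Prop := ∀ k, ¬ TyFreeIn k A

/-- `ContainsConst c A` : the type constant `c` occurs in `A`. -/
def ContainsConst : ℕ → Ty → Prop
  | _, .var _ => False
  | c, .const c' => c' = c
  | c, .arr a b => ContainsConst c a ∨ ContainsConst c b
  | c, .all a => ContainsConst c a

/-- The typing judgment `Γ ⊢_F t : A` of system F, with rules
(ax), (→i), (→e), (∀i), (∀e). -/
inductive TypF : List Ty → Trm → Ty → Prop
  | var (Γ : List Ty) (n : ℕ) (A : Ty) : Γ[n]? = some A → TypF Γ (.var n) A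
  | abs {Γ : List Ty} {t : Trm} {B C : Ty} :
      TypF (B :: Γ) t C → TypF Γ (.lam t) (.arr B C)
  | app {Γ : List Ty} {u v : Trm} {B C : Ty} :
      TypF Γ u (.arr B C) → TypF Γ v B → TypF Γ (.app u v) C
  | allI {Γ : List Ty} {t : Trm} {A : Ty} :
      TypF (Γ.map (liftTy 1 0)) t A → TypF Γ t (.all A)
  | allE {Γ : List Ty} {t : Trm} {A : Ty} (G : Ty) :
      TypF Γ t (.all A) → TypF Γ t (substTy A 0 G)

/-- The typing judgment `Γ ⊢_{F₀} t : A` of system F₀, i.e. system F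
without the rule (∀e). -/
inductive TypF0 : List Ty → Trm → Ty → Prop
  | var (Γ : List Ty) (n : ℕ) (A : Ty) : Γ[n]? = some A → TypF0 Γ (.var n) A
  | abs {Γ : List Ty} {t : Trm} {B C : Ty} :
      TypF0 (B :: Γ) t C → TypF0 Γ (.lam t) (.arr B C)
  | app {Γ : List Ty} {u v : Trm} {B C : Ty} :
      TypF0 Γ u (.arr B C) → TypF0 Γ v B → TypF0 Γ (.app u v) C
  | allI {Γ : List Ty} {t : Trm} {A : Ty} :
      TypF0 (Γ.map (liftTy 1 0)) t A → TypF0 Γ t (.all A)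

/-- The typing judgment `Γ ⊢_S t : A` of the simple type system S,
with rules (ax), (→i), (→e) only. -/
inductive TypS : List Ty → Trm → Ty → Prop
  | var (Γ : List Ty) (n : ℕ) (A : Ty) : Γ[n]? = some A → TypS Γ (.var n) A
  | abs {Γ : List Ty} {t : Trm} {B C : Ty} :
      TypS (B :: Γ) t C → TypS Γ (.lam t) (.arr B C)
  | app {Γ : List Ty} {u v : Trm} {B C : Ty} :
      TypS Γ u (.arr B C) → TypS Γ v B → TypS Γ (.app u v) C

/-- Quantifier-free types (types of the simple type system S). -/
def QFree : Ty → Prop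
  | .var _ => True
  | .const _ => True
  | .arr a b => QFree a ∧ QFree b
  | .all _ => False

/-- An input type : a closed type all of whose normal inhabitants are
typable in system F₀. -/
def IsInputType (E : Ty) : Prop :=
  TyClosed E ∧ ∀ t : Trm, IsNormal t → TypF [] t E → TypF0 [] t E

/-- An output type : a closed type `S` not containing the constant `O` such
that for every normal term `t`, if `α : O ⊢_F t : S` then `α ∉ Fv(t)`. -/
def IsOutputType (S : Ty) : Prop :=
  TyClosed S ∧ ¬ ContainsConst 0 S ∧
    ∀ t : Trm, IsNormal t → TypF [tyO] t S → ¬ FreeIn 0 t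

/-- A syntactical data type : a closed type which is both input and output. -/
def IsSyntacticalDataType (D : Ty) : Prop := IsInputType D ∧ IsOutputType D

mutual
  /-- The ∀⁺ types (positive quantifiers). -/
  inductive PosTy : Ty → Prop
    | var (n : ℕ) : PosTy (.var n)
    | arr {B A : Ty} : NegTy B → PosTy A → PosTy (.arr B A)
    | all {A : Ty} : PosTy A → TyFreeIn 0 A → PosTy (.all A)
  /-- The ∀⁻ types (negative quantifiers). -/
  inductive NegTy : Ty → Prop
    | var (n : ℕ) : NegTy (.var n)
    | arr {B A : Ty} : PosTy B → NegTy A → NegTy (.arr B A)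
end

/-- `EndsInConst c A` : the type `A` ends in the type constant `c`. -/
inductive EndsInConst : ℕ → Ty → Prop
  | base (c : ℕ) : EndsInConst c (.const c)
  | arr {c : ℕ} {A : Ty} (B : Ty) : EndsInConst c A → EndsInConst c (.arr B A)
  | all {c : ℕ} {A : Ty} : EndsInConst c A → EndsInConst c (.all A)

/-- `EndsInVar k A` : the type `A` ends in the type variable `k`
(crossing a quantifier ∀X with X ≠ the variable is allowed). -/
inductive EndsInVar : ℕ → Ty → Prop
  | base (k : ℕ) : EndsInVar k (.var k)
  | arr {k : ℕ} {A : Ty} (B : Ty) : EndsInVar k A → EndsInVar k (.arr B A)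
  | all {k : ℕ} {A : Ty} : EndsInVar (k + 1) A → EndsInVar k (.all A)

/-- The side condition of the restricted rule (∀e)_F : the body `A` of `∀X A`
(the variable X having index `k`) is of the form
`∀X₀(A₁ → ∀X₁(A₂ → … → ∀X_{n-1}(A_n → ∀X_n Y)…))` with `Y = X` or one of the
`A_i` ending in `X`. -/
inductive FFForm : ℕ → Ty → Prop
  | base (k : ℕ) : FFForm k (.var k)
  | all {k : ℕ} {A : Ty} : FFForm (k + 1) A → FFForm k (.all A)
  | arrTail {k : ℕ} {C : Ty} (B : Ty) : FFForm k C → FFForm k (.arr B C)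
  | arrHit {k : ℕ} {B C : Ty} : EndsInVar k B → (∃ j, EndsInVar j C) →
      FFForm k (.arr B C)

/-- The typing judgment of system F_F : system F where the rule (∀e) is
replaced by the restricted rule (∀e)_F. -/
inductive TypFF : List Ty → Trm → Ty → Prop
  | var (Γ : List Ty) (n : ℕ) (A : Ty) : Γ[n]? = some A → TypFF Γ (.var n) A
  | abs {Γ : List Ty} {t : Trm} {B C : Ty} :
      TypFF (B :: Γ) t C → TypFF Γ (.lam t) (.arr B C)
  | app {Γ : List Ty} {u v : Trm} {B C : Ty} :
      TypFF Γ u (.arr B C) → TypFF Γ v B → TypFF Γ (.app u v) C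
  | allI {Γ : List Ty} {t : Trm} {A : Ty} :
      TypFF (Γ.map (liftTy 1 0)) t A → TypFF Γ t (.all A)
  | allE {Γ : List Ty} {t : Trm} {A : Ty} (G : Ty) :
      FFForm 0 A → TypFF Γ t (.all A) → TypFF Γ t (substTy A 0 G)

/-- An output type of system F_F. -/
def IsOutputTypeFF (S : Ty) : Prop :=
  TyClosed S ∧ ¬ ContainsConst 0 S ∧
    ∀ t : Trm, IsNormal t → TypFF [tyO] t S → ¬ FreeIn 0 t

/-- Saturated sets of λ-terms. -/
def Saturated (G : Set Trm) : Prop := ∀ t u : Trm, WHRed t u → u ∈ G → t ∈ G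

/-- `G → G'` on sets of λ-terms. -/
def SetArr (G G' : Set Trm) : Set Trm := {u : Trm | ∀ t ∈ G, Trm.app u t ∈ G'}

/-- Extension of an interpretation by a set for the (de Bruijn) variable 0. -/
def consEnv (G : Set Trm) (I : ℕ → Set Trm) : ℕ → Set Trm
  | 0 => G
  | n + 1 => I n

/-- The value `|A|_I` of a type in an interpretation (`C` interprets the
type constants, `I` the type variables). -/
def TyVal (C : ℕ → Set Trm) : Ty → (ℕ → Set Trm) → Set Trm
  | .var n, I => I n
  | .const c, _ => C c
  | .arr a b, I => SetArr (TyVal C a I) (TyVal C b I)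
  | .all a, I => {t : Trm | ∀ G : Set Trm, Saturated G → t ∈ TyVal C a (consEnv G I)}

/-- `|A|` : the intersection of the values of `A` under all interpretations
by saturated sets. -/
def TyGlobal (A : Ty) : Set Trm :=
  {t : Trm | ∀ C I : ℕ → Set Trm, (∀ c, Saturated (C c)) → (∀ n, Saturated (I n)) →
    t ∈ TyVal C A I}

/-- A data type in Krivine's sense : a closed type `A` with `|A| ≠ ∅` such that
every term of `|A|` β-reduces to a closed term. -/
def IsDataType (A : Ty) : Prop :=
  TyClosed A ∧ TyGlobal A ≠ ∅ ∧
    ∀ t ∈ TyGlobal A, ∃ t' : Trm, BetaRed t t' ∧ TrmClosed t'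

/-- The product type `A ∧ B = ∀X((A → (B → X)) → X)` (X fresh). -/
def tyAnd (A B : Ty) : Ty :=
  .all (.arr (.arr (liftTy 1 0 A) (.arr (liftTy 1 0 B) (.var 0))) (.var 0))

/-- The disjoint sum type `A ∨ B = ∀X((A → X) → ((B → X) → X))` (X fresh). -/
def tyOr (A B : Ty) : Ty :=
  .all (.arr (.arr (liftTy 1 0 A) (.var 0))
    (.arr (.arr (liftTy 1 0 B) (.var 0)) (.var 0)))

/-- The type `LA = ∀X(X → ((A → (X → X)) → X))` of lists of objects of `A`. -/
def tyList (A : Ty) : Ty :=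
  .all (.arr (.var 0)
    (.arr (.arr (liftTy 1 0 A) (.arr (.var 0) (.var 0))) (.var 0)))

/-- Negation `¬A = A → ⊥`. -/
def tyNeg (A : Ty) : Ty := .arr A tyBot

/-- The Gödel translation `A*` : every atomic subformula `R` is replaced
by `¬R`. -/
def godel : Ty → Ty
  | .var n => .arr (.var n) tyBot
  | .const c => .arr (.const c) tyBot
  | .arr a b => .arr (godel a) (godel b)
  | .all a => .all (godel a)

/-- `T` is a storage operator for the pair of types `(E, S)`. -/
def IsStorageOpPair (T : Trm) (E S : Ty) : Prop :=
  TrmClosed T ∧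
    ∀ t : Trm, TypF [] t E →
      ∃ τ τ' : Trm, BetaEq τ τ' ∧ TypF [] τ' S ∧
        ∀ θ : Trm, BetaEq θ t →
          ∀ f : ℕ, ¬ FreeIn f θ → ¬ FreeIn f τ →
            ∃ σ : ℕ → Trm,
              WHRed (.app (.app T θ) (.var f)) (.app (.var f) (msubst σ τ))

/-- `T` is a storage operator for the type `D`. -/
def IsStorageOp (T : Trm) (D : Ty) : Prop := IsStorageOpPair T D D

/-- The term `λx₁…λxₙ.α` (n-fold abstraction over the free variable `α`). -/
def nlam (n a : ℕ) : Trm := Trm.lam^[n] (Trm.var (a + n))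

/-- The term `p_n = λx₁…λxₙλx.x`. -/
def pTrm (n : ℕ) : Trm := Trm.lam^[n] (Trm.lam (Trm.var 0))

/-- `B₁ → … → B_n → A`. -/
def mkArr (Bs : List Ty) (A : Ty) : Ty := Bs.foldr Ty.arr A

/-- The length `Lg(E)` of a type : the number of occurrences of `→` in it. -/
def Lg : Ty → ℕ
  | .var _ => 0
  | .const _ => 0
  | .arr a b => Lg a + Lg b + 1
  | .all a => Lg a

/-- `SubtypeOf A E` : `A` is a subtype (subformula) of `E`. -/
inductive SubtypeOf : Ty → Ty → Prop
  | refl (A : Ty) : SubtypeOf A A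
  | arrL {A B C : Ty} : SubtypeOf A B → SubtypeOf A (.arr B C)
  | arrR {A B C : Ty} : SubtypeOf A C → SubtypeOf A (.arr B C)
  | all {A B : Ty} : SubtypeOf A B → SubtypeOf A (.all B)

/-- `InAppPos k t` : the variable `k` occurs in application (function)
position in `t`, i.e. some subterm of `t` is of the form `(k)u`. -/
def InAppPos : ℕ → Trm → Prop
  | _, .var _ => False
  | k, .app u v => u = .var k ∨ InAppPos k u ∨ InAppPos k v
  | k, .lam u => InAppPos (k + 1) u

/-- The simple translation `A^s` : `X^s = X`, `(B → C)^s = B^s → C^s`,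
`(∀X B)^s = B^s` (the variables freed by erasing the quantifiers are collapsed
onto the type variable `0`). `d` counts the erased quantifiers. -/
def eraseTyAux : ℕ → Ty → Ty
  | d, .var n => .var (n - d)
  | _, .const c => .const c
  | d, .arr a b => .arr (eraseTyAux d a) (eraseTyAux d b)
  | d, .all a => eraseTyAux (d + 1) a

/-- The simple translation `A^s`. -/
def eraseTy : Ty → Ty := eraseTyAux 0

/-- The identity term `λx.x`. -/
def idTrm : Trm := .lam (.var 0)

/-- The boolean `𝟙 = λxλy.x`. -/
def oneTrm : Trm := .lam (.lam (.var 1))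

/-- The pair of λ-terms `(T_F, T'_F)` associated with a type `F` (the
distinguished variable `X` having de Bruijn index `k`; the term variable `α`
is the free term variable `0`):
`T_F = T'_F = λx.x` if `X ∉ Fv(F)`;
`T_X = λxλβλg.(g)xα`, `T'_X = λx.(x)α𝟙`;
`T_{C→D} = λxλy.(T_D)(x)(T'_C)y`, `T'_{C→D} = λxλy.(T'_D)(x)(T_C)y`;
`T_{∀Y B} = λx.(T_B)x`, `T'_{∀Y B} = λx.(T'_B)x`. -/
def TTpair : ℕ → Ty → Trm × Trm
  | k, .var n =>
      if n = k then
        (.lam (.lam (.lam (.app (.app (.var 0) (.var 2)) (.var 3)))),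
         .lam (.app (.app (.var 0) (.var 1)) oneTrm))
      else (idTrm, idTrm)
  | _, .const _ => (idTrm, idTrm)
  | k, .arr C D =>
      if tyFreeInB k (.arr C D) then
        (.lam (.lam (.app (liftTrm 2 0 (TTpair k D).1)
            (.app (.var 1) (.app (liftTrm 2 0 (TTpair k C).2) (.var 0))))),
         .lam (.lam (.app (liftTrm 2 0 (TTpair k D).2)
            (.app (.var 1) (.app (liftTrm 2 0 (TTpair k C).1) (.var 0))))))
      else (idTrm, idTrm)
  | k, .all B =>
      if tyFreeInB k (.all B) then
        (.lam (.app (liftTrm 1 0 (TTpair (k + 1) B).1) (.var 0)),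
         .lam (.app (liftTrm 1 0 (TTpair (k + 1) B).2) (.var 0)))
      else (idTrm, idTrm)


/-! ### Section 1: basic term lemmas -/

def NotLam (t : Trm) : Prop := ∀ b, t ≠ .lam b

def headVar : Trm → ℕ
  | .var n => n
  | .app u _ => headVar u
  | .lam _ => 0

lemma isNormal_var (n : ℕ) : IsNormal (.var n) := by
  intro u h; cases h

lemma isNormal_lam_iff {b : Trm} : IsNormal (.lam b) ↔ IsNormal b := by
  constructor
  · intro h u hu; exact h (.lam u) (.lam hu)
  · intro h u hu; cases hu with
    | lam hs => exact h _ hs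

lemma isNormal_app_intro {u v : Trm} (hu : IsNormal u) (hv : IsNormal v)
    (hnl : NotLam u) : IsNormal (.app u v) := by
  intro w hw
  cases hw with
  | beta t u => exact hnl _ rfl
  | appL _ hs => exact hu _ hs
  | appR _ hs => exact hv _ hs

lemma isNormal_app_inv {u v : Trm} (h : IsNormal (.app u v)) :
    IsNormal u ∧ IsNormal v ∧ NotLam u := by
  refine ⟨fun w hw => h _ (.appL _ hw), fun w hw => h _ (.appR _ hw), ?_⟩
  rintro b rfl
  exact h _ (.beta b v)

lemma headVar_free : ∀ a, IsNormal a → NotLam a → FreeIn (headVar a) a := by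
  intro a
  induction a with
  | var n => intro _ _; simp [headVar, FreeIn]
  | app u v ih _ =>
      intro hn _
      obtain ⟨hu, _, hnl⟩ := isNormal_app_inv hn
      exact Or.inl (ih hu hnl)
  | lam b _ => intro _ h; exact absurd rfl (h b)

lemma sizeOf_app_left (u v : Trm) : sizeOf u < sizeOf (Trm.app u v) := by
  simp only [Trm.app.sizeOf_spec]; omega

lemma sizeOf_app_right (u v : Trm) : sizeOf v < sizeOf (Trm.app u v) := by
  simp only [Trm.app.sizeOf_spec]; omega

lemma sizeOf_lam_body (b : Trm) : sizeOf b < sizeOf (Trm.lam b) := by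
  simp only [Trm.lam.sizeOf_spec]; omega

/-! ### Section 2: type algebra -/

def tySize : Ty → ℕ
  | .var _ => 0
  | .const _ => 0
  | .arr a b => tySize a + tySize b + 1
  | .all a => tySize a + 1

lemma tySize_lift (A : Ty) : ∀ d k, tySize (liftTy d k A) = tySize A := by
  induction A with
  | var n => intro d k; simp only [liftTy]; split <;> rfl
  | const c => intro d k; rfl
  | arr a b iha ihb => intro d k; simp [liftTy, tySize, iha, ihb]
  | all a ih => intro d k; simp [liftTy, tySize, ih]

lemma lift_zero (A : Ty) : ∀ k, liftTy 0 k A = A := by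
  induction A with
  | var n => intro k; simp [liftTy]
  | const c => intro k; rfl
  | arr a b iha ihb => intro k; simp [liftTy, iha, ihb]
  | all a ih => intro k; simp [liftTy, ih]

lemma lift_of_notFree (A : Ty) : ∀ d k, (∀ j, k ≤ j → ¬ TyFreeIn j A) →
    liftTy d k A = A := by
  induction A with
  | var n =>
      intro d k h; simp only [liftTy]
      have : n < k := by
        by_contra hn
        exact h n (by omega) rfl
      simp [this]
  | const c => intro _ _ _; rfl
  | arr a b iha ihb =>
      intro d k h
      simp only [liftTy]
      rw [iha d k (fun j hj hf => h j hj (Or.inl hf)),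
        ihb d k (fun j hj hf => h j hj (Or.inr hf))]
  | all a ih =>
      intro d k h
      simp only [liftTy]
      rw [ih d (k+1) (fun j hj hf => by
        have := h (j-1) (by omega)
        simp only [TyFreeIn] at this
        have hj1 : j - 1 + 1 = j := by omega
        rw [hj1] at this
        exact this hf)]

lemma subst_of_notFree (A : Ty) : ∀ k G, (∀ j, k ≤ j → ¬ TyFreeIn j A) →
    substTy A k G = A := by
  induction A with
  | var n =>
      intro k G h; simp only [substTy]
      have : n < k := by
        by_contra hn
        exact h n (by omega) rfl
      simp [this]
  | const c => intro _ _ _; rfl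
  | arr a b iha ihb =>
      intro k G h
      simp only [substTy]
      rw [iha k G (fun j hj hf => h j hj (Or.inl hf)),
        ihb k G (fun j hj hf => h j hj (Or.inr hf))]
  | all a ih =>
      intro k G h
      simp only [substTy]
      rw [ih (k+1) G (fun j hj hf => by
        have := h (j-1) (by omega)
        simp only [TyFreeIn] at this
        have hj1 : j - 1 + 1 = j := by omega
        rw [hj1] at this
        exact this hf)]

lemma tyClosed_notFree {A : Ty} (h : TyClosed A) : ∀ j k, k ≤ j → ¬ TyFreeIn j A :=
  fun j _ _ => h j

lemma lift_closed {A : Ty} (h : TyClosed A) (d k : ℕ) : liftTy d k A = A :=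
  lift_of_notFree A d k (fun j hj => h j)

lemma subst_closed {A : Ty} (h : TyClosed A) (k : ℕ) (G : Ty) : substTy A k G = A :=
  subst_of_notFree A k G (fun j hj => h j)

/-- lift-lift collapse: `liftTy d m (liftTy e k' A) = liftTy (d+e) k' A` when `k' ≤ m ≤ k'+e`. -/
lemma lift_lift (A : Ty) : ∀ d e m k', k' ≤ m → m ≤ k' + e →
    liftTy d m (liftTy e k' A) = liftTy (d + e) k' A := by
  induction A with
  | var n =>
      intro d e m k' h1 h2
      simp only [liftTy]
      by_cases hn : n < k'
      · simp only [if_pos hn, liftTy, if_pos (show n < m by omega)]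
      · simp only [if_neg hn, liftTy, if_neg (show ¬ n + e < m by omega), if_neg hn]
        congr 1; omega
  | const c => intro _ _ _ _ _ _; rfl
  | arr a b iha ihb =>
      intro d e m k' h1 h2
      simp only [liftTy]; rw [iha d e m k' h1 h2, ihb d e m k' h1 h2]
  | all a ih =>
      intro d e m k' h1 h2
      simp only [liftTy]; rw [ih d e (m+1) (k'+1) (by omega) (by omega)]

/-- lift commutation: `liftTy 1 b (liftTy 1 a A) = liftTy 1 (a+1) (liftTy 1 b A)` when `b ≤ a`. -/
lemma lift_comm (A : Ty) : ∀ a b, b ≤ a →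
    liftTy 1 b (liftTy 1 a A) = liftTy 1 (a+1) (liftTy 1 b A) := by
  induction A with
  | var n =>
      intro a b h
      simp only [liftTy]
      by_cases h1 : n < b
      · simp [if_pos (show n < a by omega), if_pos h1, liftTy,
          if_pos (show n < a + 1 by omega), if_pos h1]; omega
      · by_cases h2 : n < a
        · simp only [if_pos h2, liftTy, if_neg h1, if_neg (show ¬ n + 1 < b by omega),
            if_pos (show n + 1 < a + 1 by omega)]
        · simp only [if_neg h2, liftTy, if_neg (show ¬ n + 1 < b by omega), if_neg h1,
            if_neg (show ¬ n + 1 < a + 1 by omega)]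
  | const c => intro _ _ _; rfl
  | arr a b iha ihb => intro x y h; simp only [liftTy]; rw [iha x y h, ihb x y h]
  | all a ih => intro x y h; simp only [liftTy]; rw [ih (x+1) (y+1) (by omega)]

/-- substitution hitting inside a lift vanishes one lift level. -/
lemma subst_lift_vanish (A : Ty) : ∀ p k m G, k ≤ m → m < k + p →
    substTy (liftTy p k A) m G = liftTy (p-1) k A := by
  induction A with
  | var n =>
      intro p k m G h1 h2
      simp only [liftTy]
      by_cases hn : n < k
      · simp only [if_pos hn, substTy, if_pos (show n < m by omega)]
      · simp only [if_neg hn, substTy, if_neg (show ¬ n + p < m by omega),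
          if_neg (show ¬ n + p = m by omega)]
        congr 1; omega
  | const c => intro _ _ _ _ _ _; rfl
  | arr a b iha ihb =>
      intro p k m G h1 h2
      simp only [liftTy, substTy]; rw [iha p k m G h1 h2, ihb p k m G h1 h2]
  | all a ih =>
      intro p k m G h1 h2
      simp only [liftTy, substTy]; rw [ih p (k+1) (m+1) G (by omega) (by omega)]

lemma subst_lift_cancel (A : Ty) (k : ℕ) (G : Ty) :
    substTy (liftTy 1 k A) k G = A := by
  rw [subst_lift_vanish A 1 k k G (le_refl k) (by omega), lift_zero]

/-- lift-subst commutation: `substTy (liftTy d m B) (k+d) G = liftTy d m (substTy B k G)`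
for `m ≤ k`. -/
lemma lift_subst (B : Ty) : ∀ d m k G, m ≤ k →
    substTy (liftTy d m B) (k + d) G = liftTy d m (substTy B k G) := by
  induction B with
  | var n =>
      intro d m k G h
      simp only [liftTy, substTy]
      by_cases h1 : n < m
      · simp only [if_pos h1, substTy, if_pos (show n < k + d by omega), liftTy,
          if_pos (show n < k by omega), if_pos h1]
      · simp only [if_neg h1]
        by_cases h2 : n < k
        · simp only [substTy, if_pos (show n + d < k + d by omega), if_pos h2, liftTy,
            if_neg h1]
        · by_cases h3 : n = k
          · subst h3
            simp only [substTy, if_neg (show ¬ n + d < n + d by omega), if_pos rfl,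
              if_neg (show ¬ n < n by omega), if_pos trivial, if_pos trivial]
            rw [lift_lift G d n m 0 (by omega) (by omega), Nat.add_comm]
          · simp only [substTy, if_neg (show ¬ n + d < k + d by omega),
              if_neg (show ¬ n + d = k + d by omega), if_neg h2, if_neg h3, liftTy,
              if_neg (show ¬ n - 1 < m by omega)]
            congr 1; omega
  | const c => intro _ _ _ _ _; rfl
  | arr a b iha ihb =>
      intro d m k G h
      simp only [liftTy, substTy]; rw [iha d m k G h, ihb d m k G h]
  | all a ih =>
      intro d m k G h
      simp only [liftTy, substTy]
      have := ih d (m+1) (k+1) G (by omega)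
      rw [show k + d + 1 = k + 1 + d by omega, this]

/-- subst-subst commutation. -/
lemma subst_subst (A : Ty) : ∀ j k G G₀,
    substTy (substTy A j G₀) (j + k) G
      = substTy (substTy A (j + k + 1) G) j (substTy G₀ k G) := by
  induction A with
  | var n =>
      intro j k G G₀
      by_cases h1 : n < j
      · simp only [substTy, if_pos h1, if_pos (show n < j + k by omega),
          if_pos (show n < j + k + 1 by omega)]
      · by_cases h2 : n = j
        · subst h2
          simp only [substTy, if_neg h1, if_pos rfl, if_pos (show n < n + k + 1 by omega),
            if_neg (show ¬ n < n by omega)]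
          have := lift_subst G₀ n 0 k G (by omega)
          rw [show k + n = n + k by omega] at this
          exact this
        · by_cases h3 : n < j + k + 1
          · simp only [substTy, if_neg h1, if_neg h2, if_pos h3,
              if_pos (show n - 1 < j + k by omega), if_neg h1, if_neg h2]
          · by_cases h4 : n = j + k + 1
            · subst h4
              simp only [substTy, if_neg h1, if_neg h2,
                if_neg (show ¬ j + k + 1 < j + k + 1 by omega), if_pos rfl,
                if_neg (show ¬ j + k + 1 - 1 < j + k by omega),
                if_pos (show j + k + 1 - 1 = j + k by omega)]
              exact (subst_lift_vanish G (j+k+1) 0 j (substTy G₀ k G) (by omega) (by omega)).symm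
            · simp only [substTy, if_neg h1, if_neg h2, if_neg h3, if_neg h4,
                if_neg (show ¬ n - 1 < j + k by omega),
                if_neg (show ¬ n - 1 = j + k by omega),
                if_neg (show ¬ n - 1 < j by omega),
                if_neg (show ¬ n - 1 = j by omega)]
  | const c => intro _ _ _ _; rfl
  | arr a b iha ihb =>
      intro j k G G₀
      simp only [substTy]; rw [iha j k G G₀, ihb j k G G₀]
  | all a ih =>
      intro j k G G₀
      simp only [substTy]
      have := ih (j+1) k G G₀
      rw [show j + k + 1 = j + 1 + k by omega, this]
/-! ### Section 3: typing lemmas -/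

lemma typF_mono {Γ t A} (h : TypF Γ t A) :
    ∀ Γ', (∀ (n : ℕ) (B : Ty), Γ[n]? = some B → Γ'[n]? = some B) → TypF Γ' t A := by
  induction h with
  | var Γ n A hA => intro Γ' hm; exact .var _ _ _ (hm n A hA)
  | abs _ ih =>
      intro Γ' hm
      refine .abs (ih _ ?_)
      intro n B hB
      cases n with
      | zero => simpa using hB
      | succ n =>
          rw [List.getElem?_cons_succ] at hB ⊢
          exact hm n B hB
  | app _ _ ihu ihv => intro Γ' hm; exact .app (ihu _ hm) (ihv _ hm)
  | @allI Γi ti Ai _ ih =>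
      intro Γ' hm
      refine .allI (ih _ ?_)
      intro n B hB
      rw [List.getElem?_map] at hB ⊢
      cases hΓ : Γi[n]? with
      | none => rw [hΓ] at hB; simp at hB
      | some B₀ =>
          rw [hΓ] at hB
          rw [hm n B₀ hΓ]
          exact hB
  | allE G _ ih => intro Γ' hm; exact .allE G (ih _ hm)

lemma typF0_mono {Γ t A} (h : TypF0 Γ t A) :
    ∀ Γ', (∀ (n : ℕ) (B : Ty), Γ[n]? = some B → Γ'[n]? = some B) → TypF0 Γ' t A := by
  induction h with
  | var Γ n A hA => intro Γ' hm; exact .var _ _ _ (hm n A hA)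
  | abs _ ih =>
      intro Γ' hm
      refine .abs (ih _ ?_)
      intro n B hB
      cases n with
      | zero => simpa using hB
      | succ n =>
          rw [List.getElem?_cons_succ] at hB ⊢
          exact hm n B hB
  | app _ _ ihu ihv => intro Γ' hm; exact .app (ihu _ hm) (ihv _ hm)
  | @allI Γi ti Ai _ ih =>
      intro Γ' hm
      refine .allI (ih _ ?_)
      intro n B hB
      rw [List.getElem?_map] at hB ⊢
      cases hΓ : Γi[n]? with
      | none => rw [hΓ] at hB; simp at hB
      | some B₀ =>
          rw [hΓ] at hB
          rw [hm n B₀ hΓ]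
          exact hB

lemma typF_free_bound {Γ t A} (h : TypF Γ t A) : ∀ k, FreeIn k t → k < Γ.length := by
  induction h with
  | var Γ n A hA =>
      intro k hk
      have hkn : n = k := hk
      subst hkn
      by_contra hn
      rw [List.getElem?_eq_none (by omega)] at hA
      cases hA
  | abs _ ih =>
      intro k hk
      have := ih (k+1) hk
      simpa using Nat.lt_of_succ_lt_succ (by simpa using this)
  | app _ _ ihu ihv =>
      intro k hk
      cases hk with
      | inl h => exact ihu k h
      | inr h => exact ihv k h
  | allI _ ih => intro k hk; simpa using ih k hk
  | allE G _ ih => exact ih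

lemma typF_strengthen {t A} : ∀ {Δ Γ : List Ty}, TypF (Δ ++ Γ) t A →
    (∀ k, FreeIn k t → k < Δ.length) → TypF Δ t A := by
  intro Δ Γ h
  generalize hctx : Δ ++ Γ = Θ at h
  induction h generalizing Δ Γ with
  | var Θ n A hA =>
      intro hb
      subst hctx
      have hn : n < Δ.length := hb n rfl
      refine .var _ _ _ ?_
      rw [List.getElem?_append, if_pos hn] at hA
      exact hA
  | abs _ ih =>
      intro hb
      subst hctx
      refine .abs (ih (Δ := _ :: Δ) rfl ?_)
      intro k hk
      match k with
      | 0 => simp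
      | k+1 =>
          have : FreeIn k (.lam _) := hk
          simpa using hb k hk
  | app _ _ ihu ihv =>
      intro hb
      exact .app (ihu hctx (fun k hk => hb k (Or.inl hk)))
        (ihv hctx (fun k hk => hb k (Or.inr hk)))
  | allI _ ih =>
      intro hb
      subst hctx
      refine .allI (ih (Δ := Δ.map (liftTy 1 0)) (Γ := Γ.map (liftTy 1 0))
        (by rw [List.map_append]) ?_)
      intro k hk
      simpa using hb k hk
  | allE G _ ih => intro hb; exact .allE G (ih hctx hb)

/-- Type substitution lemma for system F. -/
lemma typF_subst {Γ t A} (h : TypF Γ t A) :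
    ∀ k G, TypF (Γ.map (fun B => substTy B k G)) t (substTy A k G) := by
  induction h with
  | var Γ n A hA =>
      intro k G
      refine .var _ _ _ ?_
      rw [List.getElem?_map, hA]
      rfl
  | abs _ ih => intro k G; exact .abs (ih k G)
  | app _ _ ihu ihv => intro k G; exact .app (ihu k G) (ihv k G)
  | allI _ ih =>
      intro k G
      refine .allI ?_
      have := ih (k+1) G
      rw [List.map_map] at this ⊢
      have heq : (fun B => substTy B (k+1) G) ∘ liftTy 1 0
          = liftTy 1 0 ∘ (fun B => substTy B k G) := by
        funext B
        simp only [Function.comp]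
        have := lift_subst B 1 0 k G (by omega)
        simpa using this
      rw [heq] at this
      exact this
  | @allE Γ' t' A' G₀ _ ih =>
      intro k G
      have h1 : TypF (Γ'.map (fun B => substTy B k G)) t' (.all (substTy A' (k+1) G)) :=
        ih k G
      have := TypF.allE (substTy G₀ k G) h1
      have heq := subst_subst A' 0 k G G₀
      simp only [Nat.zero_add] at heq
      rw [heq]
      exact this

/-- Type substitution lemma for system F₀. -/
lemma typF0_subst {Γ t A} (h : TypF0 Γ t A) :
    ∀ k G, TypF0 (Γ.map (fun B => substTy B k G)) t (substTy A k G) := by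
  induction h with
  | var Γ n A hA =>
      intro k G
      refine .var _ _ _ ?_
      rw [List.getElem?_map, hA]
      rfl
  | abs _ ih => intro k G; exact .abs (ih k G)
  | app _ _ ihu ihv => intro k G; exact .app (ihu k G) (ihv k G)
  | allI _ ih =>
      intro k G
      refine .allI ?_
      have := ih (k+1) G
      rw [List.map_map] at this ⊢
      have heq : (fun B => substTy B (k+1) G) ∘ liftTy 1 0
          = liftTy 1 0 ∘ (fun B => substTy B k G) := by
        funext B
        simp only [Function.comp]
        have := lift_subst B 1 0 k G (by omega)
        simpa using this
      rw [heq] at this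
      exact this

/-- Un-lifting for F₀. -/
lemma typF0_unlift {Γ t S} (h : TypF0 (Γ.map (liftTy 1 0)) t (liftTy 1 0 S)) :
    TypF0 Γ t S := by
  have := typF0_subst h 0 (Ty.var 0)
  rw [List.map_map] at this
  have heq : (fun B => substTy B 0 (Ty.var 0)) ∘ liftTy 1 0 = id := by
    funext B
    simp only [Function.comp, id]
    exact subst_lift_cancel B 0 _
  rw [heq, List.map_id, subst_lift_cancel] at this
  exact this
/-! ### Section 4: inversion machinery -/

/-- Gen/inst closure of a type (types derivable for a fixed variable). -/
inductive Reach : Ty → Ty → Prop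
  | refl (A : Ty) : Reach A A
  | gen {A B : Ty} : Reach (liftTy 1 0 A) B → Reach A (.all B)
  | inst {A B : Ty} (G : Ty) : Reach A (.all B) → Reach A (substTy B 0 G)

/-- Gen-only closure. -/
inductive Clo : Ty → Ty → Prop
  | refl (A : Ty) : Clo A A
  | step {A B : Ty} : Clo (liftTy 1 0 A) B → Clo A (.all B)

inductive AppTy : List Ty → Trm → Trm → Ty → Prop
  | base {Γ : List Ty} {u v : Trm} {C W : Ty} :
      TypF Γ u (.arr C W) → TypF Γ v C → AppTy Γ u v W
  | gen {Γ : List Ty} {u v : Trm} {A : Ty} :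
      AppTy (Γ.map (liftTy 1 0)) u v A → AppTy Γ u v (.all A)
  | inst {Γ : List Ty} {u v : Trm} {A : Ty} (G : Ty) :
      AppTy Γ u v (.all A) → AppTy Γ u v (substTy A 0 G)

inductive LamTy : List Ty → Trm → Ty → Prop
  | base {Γ : List Ty} {b : Trm} {C D : Ty} :
      TypF (C :: Γ) b D → LamTy Γ b (.arr C D)
  | gen {Γ : List Ty} {b : Trm} {A : Ty} :
      LamTy (Γ.map (liftTy 1 0)) b A → LamTy Γ b (.all A)

lemma lamTy_subst {Γ b A} (h : LamTy Γ b A) :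
    ∀ k G, LamTy (Γ.map (fun B => substTy B k G)) b (substTy A k G) := by
  induction h with
  | base hb =>
      intro k G
      exact .base (by simpa using typF_subst hb k G)
  | @gen Γi bi Ai _ ih =>
      intro k G
      refine .gen ?_
      have := ih (k+1) G
      rw [List.map_map] at this ⊢
      have heq : (fun B => substTy B (k+1) G) ∘ liftTy 1 0
          = liftTy 1 0 ∘ (fun B => substTy B k G) := by
        funext B
        simp only [Function.comp]
        have := lift_subst B 1 0 k G (by omega)
        simpa using this
      rw [heq] at this
      exact this

lemma lamTy_inst {Γ b A} (h : LamTy Γ b (.all A)) (G : Ty) :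
    LamTy Γ b (substTy A 0 G) := by
  cases h with
  | gen h0 =>
      have := lamTy_subst h0 0 G
      rw [List.map_map] at this
      have heq : (fun B => substTy B 0 G) ∘ liftTy 1 0 = id := by
        funext B
        simp only [Function.comp, id]
        exact subst_lift_cancel B 0 _
      rw [heq, List.map_id] at this
      exact this

/-- Inversion for F typing, by shape of the subject. -/
lemma typF_inv {Γ t W} (h : TypF Γ t W) :
    (∀ n, t = .var n → ∃ A, Γ[n]? = some A ∧ Reach A W) ∧
    (∀ u v, t = .app u v → AppTy Γ u v W) ∧
    (∀ b, t = .lam b → LamTy Γ b W) := by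
  induction h with
  | var Γ n A hA =>
      refine ⟨?_, ?_, ?_⟩
      · rintro m rfl'
        cases rfl'
        exact ⟨A, hA, .refl A⟩
      · intro u v h; cases h
      · intro b h; cases h
  | @abs Γi ti Bi Ci hb _ =>
      refine ⟨?_, ?_, ?_⟩
      · intro m h; cases h
      · intro u v h; cases h
      · rintro b h; cases h; exact .base hb
  | @app Γi ui vi Bi Ci hu hv _ _ =>
      refine ⟨?_, ?_, ?_⟩
      · intro m h; cases h
      · rintro u v h; cases h; exact .base hu hv
      · intro b h; cases h
  | @allI Γi ti Ai _ ih =>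
      refine ⟨?_, ?_, ?_⟩
      · rintro m rfl
        obtain ⟨A', hA', hR⟩ := ih.1 m rfl
        rw [List.getElem?_map] at hA'
        cases hΓ : Γi[m]? with
        | none => rw [hΓ] at hA'; simp at hA'
        | some A₀ =>
            rw [hΓ] at hA'
            refine ⟨A₀, rfl, .gen ?_⟩
            simp only [Option.map_some] at hA'
            cases hA'
            exact hR
      · rintro u v rfl
        exact .gen (ih.2.1 u v rfl)
      · rintro b rfl
        exact .gen (ih.2.2 b rfl)
  | @allE Γi ti Ai G _ ih =>
      refine ⟨?_, ?_, ?_⟩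
      · rintro m rfl
        obtain ⟨A', hA', hR⟩ := ih.1 m rfl
        exact ⟨A', hA', .inst G hR⟩
      · rintro u v rfl
        exact .inst G (ih.2.1 u v rfl)
      · rintro b rfl
        exact (lamTy_inst (ih.2.2 b rfl) G)

def notAll (A : Ty) : Prop := ∀ B, A ≠ .all B

lemma notAll_lift {A : Ty} (h : notAll A) : notAll (liftTy 1 0 A) := by
  intro B hB
  cases A with
  | var n => simp only [liftTy] at hB; split at hB <;> cases hB
  | const c => cases hB
  | arr a b => cases hB
  | all a => exact h a rfl

lemma clo_subst {B : Ty} : ∀ {A : Ty} {k : ℕ} (G : Ty), Clo (liftTy 1 k A) B →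
    Clo A (substTy B k G) := by
  suffices h : ∀ {X B : Ty}, Clo X B → ∀ {A k} (G : Ty), X = liftTy 1 k A →
      Clo A (substTy B k G) by
    intro A k G hc
    exact h hc G rfl
  intro X B hc
  induction hc with
  | refl A' =>
      rintro A k G rfl
      rw [subst_lift_cancel]
      exact .refl A
  | @step X' B' _ ih =>
      rintro A k G rfl
      have hcomm : liftTy 1 0 (liftTy 1 k A) = liftTy 1 (k+1) (liftTy 1 0 A) :=
        lift_comm A k 0 (by omega)
      have := ih (A := liftTy 1 0 A) (k := k+1) G hcomm
      exact .step this

lemma clo_inst {A B : Ty} (hA : notAll A) (h : Clo A (.all B)) (G : Ty) :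
    Clo A (substTy B 0 G) := by
  cases h with
  | refl => exact absurd rfl (hA B)
  | step h0 => exact clo_subst G h0

lemma reach_clo {A W : Ty} (hA : notAll A) (h : Reach A W) : Clo A W := by
  induction h with
  | refl => exact .refl _
  | @gen A' B _ ih => exact .step (ih (notAll_lift hA))
  | @inst A' B G _ ih => exact clo_inst hA (ih hA) G

lemma clo_arr_inv {A W C D : Ty} (h : Clo A W) (hW : W = .arr C D) : A = W := by
  cases h with
  | refl => rfl
  | step => cases hW

lemma clo_var_inv {A W : Ty} {m : ℕ} (h : Clo A W) (hW : W = .var m) : A = W := by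
  cases h with
  | refl => rfl
  | step => cases hW

lemma clo_const_inv {A W : Ty} {c : ℕ} (h : Clo A W) (hW : W = .const c) : A = W := by
  cases h with
  | refl => rfl
  | step => cases hW

lemma clo_size {A W : Ty} (h : Clo A W) : tySize A ≤ tySize W := by
  induction h with
  | refl => exact le_refl _
  | @step A' B _ ih =>
      rw [tySize_lift] at ih
      simp only [tySize]
      omega

/-- Typing transport along Clo, for closed types in arbitrary contexts. -/
lemma clo_typF : ∀ {S W : Ty}, Clo S W → TyClosed S →
    ∀ {c : Trm}, (∀ Γ, TypF Γ c S) → ∀ Γ, TypF Γ c W := by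
  intro S W h
  induction h with
  | refl => intro _ _ hc; exact hc
  | @step S' B _ ih =>
      intro hcl c hc Γ
      have hlift : liftTy 1 0 S' = S' := lift_closed hcl 1 0
      have h1 : ∀ Γ, TypF Γ c B := by
        refine ih ?_ ?_
        · rw [hlift]; exact hcl
        · rw [hlift]; exact hc
      exact .allI (h1 _)
/-! ### Section 5: the term δ = λx.(x)x and canonical inhabitants -/

def tyBotF : Ty := .all (.var 0)
def tyO0 : Ty := .const 0
def tyN : Ty := .arr tyBotF tyO0
def delta : Trm := .lam (.app (.var 0) (.var 0))

lemma tyBotF_closed : TyClosed tyBotF := by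
  intro k h
  simp only [tyBotF, TyFreeIn] at h
  omega

lemma tyO0_closed : TyClosed tyO0 := by
  intro k h
  simp [tyO0, TyFreeIn] at h

lemma tyN_closed : TyClosed tyN := by
  intro k h
  cases h with
  | inl h => exact tyBotF_closed k h
  | inr h => exact tyO0_closed k h

lemma bot_inst {Γ : List Ty} {t : Trm} (h : TypF Γ t tyBotF) (G : Ty) :
    TypF Γ t G := by
  have := TypF.allE G h
  simpa only [substTy, if_neg (by omega : ¬ (0:ℕ) < 0), if_pos rfl, lift_zero, ↓reduceIte] using this

lemma delta_typF (Γ : List Ty) : TypF Γ delta tyN := by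
  refine .abs ?_
  have hx : TypF (tyBotF :: Γ) (.var 0) tyBotF := .var _ _ _ (by simp)
  exact .app (bot_inst hx tyN) hx

lemma delta_normal : IsNormal delta := by
  rw [delta, isNormal_lam_iff]
  exact isNormal_app_intro (isNormal_var 0) (isNormal_var 0) (fun b h => by cases h)

lemma delta_closed : ∀ k, ¬ FreeIn k delta := by
  intro k h
  simp only [delta, FreeIn] at h
  omega

def canon : List Ty → Trm
  | [] => delta
  | _ :: Ps => .lam (canon Ps)

lemma canon_typF : ∀ (Ps : List Ty) (Γ : List Ty), TypF Γ (canon Ps) (mkArr Ps tyN) := by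
  intro Ps
  induction Ps with
  | nil => exact delta_typF
  | cons P Ps ih =>
      intro Γ
      exact .abs (ih (P :: Γ))

lemma canon_normal : ∀ Ps, IsNormal (canon Ps) := by
  intro Ps
  induction Ps with
  | nil => exact delta_normal
  | cons P Ps ih => rw [canon, isNormal_lam_iff]; exact ih

lemma canon_closed : ∀ Ps k, ¬ FreeIn k (canon Ps) := by
  intro Ps
  induction Ps with
  | nil => exact delta_closed
  | cons P Ps ih => intro k h; exact ih (k+1) h

/-- Subterm relation. -/
inductive Sub (s : Trm) : Trm → Prop
  | refl : Sub s s
  | appL {u v : Trm} : Sub s u → Sub s (.app u v)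
  | appR {u v : Trm} : Sub s v → Sub s (.app u v)
  | lam {b : Trm} : Sub s b → Sub s (.lam b)

lemma canon_sub_delta : ∀ Ps, Sub delta (canon Ps) := by
  intro Ps
  induction Ps with
  | nil => exact .refl
  | cons P Ps ih => exact .lam ih

/-- F₀ inversion: variables. -/
lemma typF0_var_inv {Γ : List Ty} {t : Trm} {W : Ty} (h : TypF0 Γ t W) :
    ∀ n, t = .var n → ∃ A, Γ[n]? = some A ∧ Clo A W := by
  induction h with
  | var Γ n A hA =>
      rintro m rfl'
      cases rfl'
      exact ⟨A, hA, .refl A⟩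
  | abs _ _ => intro m h; cases h
  | app _ _ _ _ => intro m h; cases h
  | @allI Γi ti Ai _ ih =>
      rintro m rfl
      obtain ⟨A', hA', hR⟩ := ih m rfl
      rw [List.getElem?_map] at hA'
      cases hΓ : Γi[m]? with
      | none => rw [hΓ] at hA'; simp at hA'
      | some A₀ =>
          rw [hΓ] at hA'
          refine ⟨A₀, rfl, .step ?_⟩
          simp only [Option.map_some] at hA'
          cases hA'
          exact hR

/-- F₀ inversion: applications. -/
lemma typF0_app_inv {Γ : List Ty} {t : Trm} {W : Ty} (h : TypF0 Γ t W) :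
    ∀ u v, t = .app u v → ∃ Γ' C W', TypF0 Γ' u (.arr C W') ∧ TypF0 Γ' v C := by
  induction h with
  | var _ _ _ _ => intro u v h; cases h
  | abs _ _ => intro u v h; cases h
  | @app Γi ui vi Bi Ci hu hv _ _ =>
      rintro u v h; cases h
      exact ⟨Γi, Bi, Ci, hu, hv⟩
  | allI _ ih => exact ih

/-- F₀ inversion: abstractions. -/
lemma typF0_lam_inv {Γ : List Ty} {t : Trm} {W : Ty} (h : TypF0 Γ t W) :
    ∀ b, t = .lam b → ∃ Γ' W', TypF0 Γ' b W' := by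
  induction h with
  | var _ _ _ _ => intro b h; cases h
  | @abs Γi ti Bi Ci hb _ =>
      rintro b h; cases h
      exact ⟨Bi :: Γi, Ci, hb⟩
  | app _ _ _ _ => intro b h; cases h
  | allI _ ih => exact ih

lemma noF0_xx : ∀ Γ W, TypF0 Γ (.app (.var 0) (.var 0)) W → False := by
  intro Γ W h
  obtain ⟨Γ', C, W', hu, hv⟩ := typF0_app_inv h _ _ rfl
  obtain ⟨A₁, hA₁, hc₁⟩ := typF0_var_inv hu 0 rfl
  obtain ⟨A₂, hA₂, hc₂⟩ := typF0_var_inv hv 0 rfl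
  rw [hA₁] at hA₂
  cases hA₂
  have h1 : A₁ = .arr C W' := clo_arr_inv hc₁ rfl
  subst h1
  have := clo_size hc₂
  simp only [tySize] at this
  omega

lemma noF0_delta : ∀ Γ W, TypF0 Γ delta W → False := by
  intro Γ W h
  obtain ⟨Γ', W', hb⟩ := typF0_lam_inv h _ rfl
  exact noF0_xx _ _ hb

/-- Subterms of F₀-typable terms are F₀-typable. -/
lemma sub_typF0 {s : Trm} : ∀ {t : Trm}, Sub s t → ∀ {Γ W}, TypF0 Γ t W →
    ∃ Γ' W', TypF0 Γ' s W' := by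
  intro t hs
  induction hs with
  | refl => intro Γ W h; exact ⟨Γ, W, h⟩
  | appL _ ih =>
      intro Γ W h
      obtain ⟨Γ', C, W', hu, _⟩ := typF0_app_inv h _ _ rfl
      exact ih hu
  | appR _ ih =>
      intro Γ W h
      obtain ⟨Γ', C, W', _, hv⟩ := typF0_app_inv h _ _ rfl
      exact ih hv
  | lam _ ih =>
      intro Γ W h
      obtain ⟨Γ', W', hb⟩ := typF0_lam_inv h _ rfl
      exact ih hb
/-! ### Section 6: signature types -/

lemma mkArr_nil (T : Ty) : mkArr [] T = T := rfl
lemma mkArr_cons (P : Ty) (Ps : List Ty) (T : Ty) :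
    mkArr (P :: Ps) T = .arr P (mkArr Ps T) := rfl

lemma mkArr_lift (d k : ℕ) : ∀ (Ps : List Ty) (T : Ty),
    liftTy d k (mkArr Ps T) = mkArr (Ps.map (liftTy d k)) (liftTy d k T) := by
  intro Ps
  induction Ps with
  | nil => intro T; rfl
  | cons P Ps ih =>
      intro T
      simp only [mkArr_cons, List.map_cons, liftTy]
      exact congrArg _ (ih T)

lemma mkArr_subst (k : ℕ) (G : Ty) : ∀ (Ps : List Ty) (T : Ty),
    substTy (mkArr Ps T) k G = mkArr (Ps.map (fun P => substTy P k G)) (substTy T k G) := by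
  intro Ps
  induction Ps with
  | nil => intro T; rfl
  | cons P Ps ih =>
      intro T
      simp only [mkArr_cons, List.map_cons, substTy]
      exact congrArg _ (ih T)

lemma mkArr_closed : ∀ (Ps : List Ty) (T : Ty), (∀ P ∈ Ps, TyClosed P) → TyClosed T →
    TyClosed (mkArr Ps T) := by
  intro Ps
  induction Ps with
  | nil => intro T _ hT; exact hT
  | cons P Ps ih =>
      intro T hPs hT k hk
      cases hk with
      | inl h => exact hPs P (by simp) k h
      | inr h => exact ih T (fun Q hQ => hPs Q (by simp [hQ])) hT k h

lemma arr_closed_inv {C D : Ty} (h : TyClosed (.arr C D)) : TyClosed C ∧ TyClosed D :=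
  ⟨fun k hk => h k (Or.inl hk), fun k hk => h k (Or.inr hk)⟩

lemma mkArr_notAll : ∀ (Ps : List Ty) (T : Ty), notAll T → notAll (mkArr Ps T) := by
  intro Ps
  cases Ps with
  | nil => intro T hT; exact hT
  | cons P Ps => intro T _ B h; cases h

/-- Entry/suffix form in the substituted world. -/
def DTyE (E : Ty) : Prop := ∃ Ps, E = mkArr Ps tyN ∧ TyClosed E
def DTyS (S : Ty) : Prop := DTyE S ∨ S = tyO0

lemma dtyE_notAll {E : Ty} (h : DTyE E) : notAll E := by
  obtain ⟨Ps, rfl, _⟩ := h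
  cases Ps with
  | nil => intro B hB; cases hB
  | cons P Ps => intro B hB; cases hB

lemma dtyS_notAll {S : Ty} (h : DTyS S) : notAll S := by
  cases h with
  | inl h => exact dtyE_notAll h
  | inr h => subst h; intro B hB; cases hB

lemma dtyS_closed {S : Ty} (h : DTyS S) : TyClosed S := by
  cases h with
  | inl h => obtain ⟨_, _, hc⟩ := h; exact hc
  | inr h => subst h; exact tyO0_closed

lemma no_bot_spine {S : Ty} (hS : DTyS S) (h : Clo S tyBotF) : False := by
  cases h with
  | refl =>
      cases hS with
      | inl h =>
          obtain ⟨Ps, hPs, _⟩ := h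
          cases Ps with
          | nil => cases hPs
          | cons P Ps' => cases hPs
      | inr h => cases h
  | step h0 =>
      have hX : liftTy 1 0 S = Ty.var 0 := clo_var_inv h0 rfl
      cases S with
      | var n =>
          simp only [liftTy] at hX
          split at hX
          · omega
          · cases hX
      | const c => cases hX
      | arr a b => cases hX
      | all a => cases hX

/-- The "input class": closed types all of whose closed normal F-inhabitants are F₀-typable. -/
def InputCls (P : Ty) : Prop :=
  TyClosed P ∧ ∀ t : Trm, IsNormal t → TypF [] t P → TypF0 [] t P

/-- Suffix types of the signature, at lift level `d`. -/
def SufTy (d : ℕ) (S : Ty) : Prop :=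
  ∃ Ps, S = mkArr Ps (.var d) ∧ ∀ P ∈ Ps, P = .var d ∨ InputCls P

def CtxOK (d : ℕ) (Γ : List Ty) : Prop := ∀ T ∈ Γ, SufTy d T

lemma sufTy_notAll {d S} (h : SufTy d S) : notAll S := by
  obtain ⟨Ps, rfl, _⟩ := h
  exact mkArr_notAll Ps _ (fun B hB => by cases hB)

lemma sufTy_lift {d S} (h : SufTy d S) : SufTy (d+1) (liftTy 1 0 S) := by
  obtain ⟨Ps, rfl, hPs⟩ := h
  refine ⟨Ps.map (liftTy 1 0), ?_, ?_⟩
  · rw [mkArr_lift]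
    congr 1

  · intro P hP
    rw [List.mem_map] at hP
    obtain ⟨P₀, hP₀, rfl⟩ := hP
    cases hPs P₀ hP₀ with
    | inl h => subst h; left; simp [liftTy]
    | inr h => right; rw [lift_closed h.1]; exact h

lemma ctxOK_lift {d Γ} (h : CtxOK d Γ) : CtxOK (d+1) (Γ.map (liftTy 1 0)) := by
  intro T hT
  rw [List.mem_map] at hT
  obtain ⟨T₀, hT₀, rfl⟩ := hT
  exact sufTy_lift (h T₀ hT₀)

lemma sufTy_unlift {d S'} (h : SufTy (d+1) S') :
    ∃ S, S' = liftTy 1 0 S ∧ SufTy d S := by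
  obtain ⟨Ps, rfl, hPs⟩ := h
  induction Ps with
  | nil =>
      refine ⟨.var d, ?_, ⟨[], rfl, by simp⟩⟩
      simp only [mkArr_nil, liftTy]
      rw [if_neg (by omega)]
  | cons P Ps ih =>
      obtain ⟨S₀, hS₀, hSuf⟩ := ih (fun Q hQ => hPs Q (by simp [hQ]))
      obtain ⟨Ps₀, hPs₀, hPrem⟩ := hSuf
      cases hPs P (by simp) with
      | inl h =>
          subst h
          refine ⟨.arr (.var d) S₀, ?_, ?_⟩
          · simp only [mkArr_cons, liftTy, ← hS₀]
            congr 1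

          · exact ⟨.var d :: Ps₀, by rw [mkArr_cons, hPs₀], by
              intro Q hQ
              cases hQ with
              | head => left; rfl
              | tail _ hQ => exact hPrem Q hQ⟩
      | inr h =>
          refine ⟨.arr P S₀, ?_, ?_⟩
          · simp only [mkArr_cons, liftTy, ← hS₀]
            congr 1
            rw [lift_closed h.1]
          · exact ⟨P :: Ps₀, by rw [mkArr_cons, hPs₀], by
              intro Q hQ
              cases hQ with
              | head => right; exact h
              | tail _ hQ => exact hPrem Q hQ⟩

lemma mem_of_getElem? {Γ : List Ty} {n : ℕ} {A : Ty} (h : Γ[n]? = some A) : A ∈ Γ :=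
  List.mem_of_getElem? h

/-- Closed contexts are stable under lifting. -/
lemma map_lift_closed {Γ : List Ty} (h : ∀ E ∈ Γ, TyClosed E) :
    Γ.map (liftTy 1 0) = Γ := by
  conv_rhs => rw [← List.map_id Γ]
  exact List.map_congr_left (fun E hE => lift_closed (h E hE) 1 0)
lemma no_lam_bot {Γ : List Ty} {b : Trm} (h : TypF Γ (.lam b) tyBotF) : False := by
  have hl : LamTy Γ b tyBotF := (typF_inv h).2.2 b rfl
  rw [tyBotF] at hl
  cases hl with
  | gen h0 => cases h0

lemma freeIn_lam {k : ℕ} {b : Trm} : FreeIn k (.lam b) ↔ FreeIn (k+1) b := Iff.rfl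
lemma freeIn_app {k : ℕ} {u v : Trm} : FreeIn k (.app u v) ↔ FreeIn k u ∨ FreeIn k v := Iff.rfl
/-! ### Section 7: the surgery lemma -/

theorem sur (Γ₁ : List Ty) (hΓ₁ : ∀ E ∈ Γ₁, DTyE E) :
    ∀ (N : ℕ) (a : Trm), sizeOf a < N → IsNormal a → ∀ (Δ : List Ty) (W : Ty),
    TypF (Δ ++ Γ₁) a W →
    ((∃ a', IsNormal a' ∧ TypF (Δ ++ Γ₁) a' W
       ∧ (∀ k, Δ.length ≤ k → ¬ FreeIn k a')
       ∧ ((∃ k, Δ.length ≤ k ∧ FreeIn k a) → Sub delta a')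
       ∧ ((∀ k, Δ.length ≤ k → ¬ FreeIn k a) → a' = a)
       ∧ (NotLam a → headVar a < Δ.length → NotLam a'))
     ∧ (NotLam a → Δ.length ≤ headVar a →
        (∃ S, Clo S W ∧ DTyS S)
        ∧ (∃ a₀, IsNormal a₀ ∧ TypF (Δ ++ Γ₁) a₀ W
           ∧ (∀ k, Δ.length ≤ k → ¬ FreeIn k a₀) ∧ Sub delta a₀))) := by
  have hΓcl : ∀ E ∈ Γ₁, TyClosed E := fun E hE => by
    obtain ⟨_, _, hc⟩ := hΓ₁ E hE; exact hc
  have hmapΓ : Γ₁.map (liftTy 1 0) = Γ₁ := map_lift_closed hΓcl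
  intro N
  induction N with
  | zero => intro a h; omega
  | succ N ih =>
    intro a hsz hnorm Δ W hty
    cases a with
    | var n =>
      obtain ⟨A, hA, hR⟩ := (typF_inv hty).1 n rfl
      by_cases hn : n < Δ.length
      · refine ⟨⟨.var n, hnorm, hty, ?_, ?_, fun _ => rfl, fun _ _ => ?_⟩, ?_⟩
        · intro k hk hf
          have : n = k := hf
          omega
        · rintro ⟨k, hk, hf⟩
          have : n = k := hf
          omega
        · intro b hb; cases hb
        · intro _ hge
          exfalso
          simp only [headVar] at hge
          omega
      · -- n points into Γ₁
        rw [List.getElem?_append, if_neg hn] at hA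
        have hmem : A ∈ Γ₁ := mem_of_getElem? hA
        obtain ⟨Ps, hPsE, hAcl⟩ := hΓ₁ A hmem
        have hclo : Clo A W := reach_clo (dtyE_notAll ⟨Ps, hPsE, hAcl⟩) hR
        have hcW : ∀ Γ, TypF Γ (canon Ps) W := by
          refine clo_typF hclo hAcl ?_
          intro Γ
          rw [hPsE]
          exact canon_typF Ps Γ
        refine ⟨⟨canon Ps, canon_normal Ps, hcW _, fun k _ => canon_closed Ps k,
            fun _ => canon_sub_delta Ps, ?_, ?_⟩, ?_⟩
        · intro h2
          exact absurd rfl (h2 n (by omega))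
        · intro _ hlt
          exfalso
          simp only [headVar] at hlt
          omega
        · intro _ _
          exact ⟨⟨A, hclo, Or.inl ⟨Ps, hPsE, hAcl⟩⟩,
            ⟨canon Ps, canon_normal Ps, hcW _, fun k _ => canon_closed Ps k,
              canon_sub_delta Ps⟩⟩
    | lam b =>
      have hnb : IsNormal b := isNormal_lam_iff.mp hnorm
      have hszb : sizeOf b < N := by
        have := sizeOf_lam_body b
        omega
      have hlam : LamTy (Δ ++ Γ₁) b W := (typF_inv hty).2.2 b rfl
      have main : ∀ b0 Γt W', LamTy Γt b0 W' → sizeOf b0 < N → IsNormal b0 →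
          ∀ Δ', Γt = Δ' ++ Γ₁ → Δ'.length = Δ.length →
          ∃ a', IsNormal a' ∧ TypF Γt a' W'
            ∧ (∀ k, Δ.length ≤ k → ¬ FreeIn k a')
            ∧ ((∃ k, Δ.length ≤ k ∧ FreeIn k (Trm.lam b0)) → Sub delta a')
            ∧ ((∀ k, Δ.length ≤ k → ¬ FreeIn k (Trm.lam b0)) → a' = Trm.lam b0) := by
        intro b0 Γt W' h
        induction h with
        | @base Γi bi C D hb =>
            intro hszb0 hnb0 Δ' heq hlen
            subst heq
            have hb' : TypF ((C :: Δ') ++ Γ₁) bi D := hb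
            obtain ⟨b', hb'n, hb't, hb'f, hb's, hb'e, _⟩ :=
              (ih bi hszb0 hnb0 (C :: Δ') D hb').1
            refine ⟨.lam b', isNormal_lam_iff.mpr hb'n, .abs hb't, ?_, ?_, ?_⟩
            · intro k hk hf
              refine hb'f (k+1) ?_ hf
              simp only [List.length_cons, hlen]
              omega
            · rintro ⟨k, hk, hf⟩
              refine .lam (hb's ⟨k+1, ?_, hf⟩)
              simp only [List.length_cons, hlen]
              omega
            · intro h2
              have hbe : b' = bi := hb'e (fun k hk => by
                simp only [List.length_cons, hlen] at hk
                have := h2 (k-1) (by omega)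
                rw [freeIn_lam] at this
                rw [show k - 1 + 1 = k by omega] at this
                exact this)
              rw [hbe]
        | @gen Γi bi A hprev ihg =>
            intro hszb0 hnb0 Δ' heq hlen
            subst heq
            have hmap : (Δ' ++ Γ₁).map (liftTy 1 0) = (Δ'.map (liftTy 1 0)) ++ Γ₁ := by
              rw [List.map_append, hmapΓ]
            obtain ⟨a', h1, h2, h3, h4, h5⟩ := ihg hszb0 hnb0 (Δ'.map (liftTy 1 0)) hmap
              (by rw [List.length_map]; exact hlen)
            exact ⟨a', h1, .allI h2, h3, h4, h5⟩
      obtain ⟨a', h1, h2, h3, h4, h5⟩ := main b _ _ hlam hszb hnb Δ rfl rfl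
      refine ⟨⟨a', h1, h2, h3, h4, h5, fun hnl => absurd rfl (hnl b)⟩, ?_⟩
      intro hnl
      exact absurd rfl (hnl b)
    | app u v =>
      obtain ⟨hnu, hnv, hnl⟩ := isNormal_app_inv hnorm
      have hszu : sizeOf u < N := by have := sizeOf_app_left u v; omega
      have hszv : sizeOf v < N := by have := sizeOf_app_right u v; omega
      have happ : AppTy (Δ ++ Γ₁) u v W := (typF_inv hty).2.1 u v rfl
      -- the spine analysis, used when the head points into Γ₁
      have psi : ∀ u0 v0 Γt W', AppTy Γt u0 v0 W' →
          sizeOf u0 < N → sizeOf v0 < N → IsNormal u0 → IsNormal v0 → NotLam u0 →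
          ∀ Δ', Γt = Δ' ++ Γ₁ → Δ'.length = Δ.length →
          Δ.length ≤ headVar u0 →
          (∃ S, Clo S W' ∧ DTyS S)
          ∧ (∃ a₀, IsNormal a₀ ∧ TypF Γt a₀ W'
             ∧ (∀ k, Δ.length ≤ k → ¬ FreeIn k a₀) ∧ Sub delta a₀) := by
        intro u0 v0 Γt W' h
        induction h with
        | @base Γi ui vi C W₂ hu hv =>
            intro hszu0 hszv0 hnu0 hnv0 hnl0 Δ' heq hlen hhv
            subst heq
            obtain ⟨⟨S, hcloS, hdty⟩, _⟩ :=
              (ih ui hszu0 hnu0 Δ' (.arr C W₂) hu).2 hnl0 (by rw [hlen]; exact hhv)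
            have hSeq : S = .arr C W₂ := clo_arr_inv hcloS rfl
            subst hSeq
            cases hdty with
            | inl hE =>
                obtain ⟨Ps, hPsE, hScl⟩ := hE
                cases Ps with
                | nil =>
                    -- S = tyN : the spine continues through ⊥ → O
                    rw [mkArr_nil, tyN] at hPsE
                    injection hPsE with hC hW₂
                    subst hC; subst hW₂
                    have hvNotLam : NotLam vi := by
                      rintro b rfl
                      exact no_lam_bot hv
                    have hvHead : headVar vi < Δ.length := by
                      by_contra hge
                      push_neg at hge
                      obtain ⟨⟨Sv, hcv, hdv⟩, _⟩ :=
                        (ih vi hszv0 hnv0 Δ' tyBotF hv).2 hvNotLam (by rw [hlen]; exact hge)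
                      exact no_bot_spine hdv hcv
                    obtain ⟨v', hv'n, hv't, hv'f, _, _, hv'nl⟩ :=
                      (ih vi hszv0 hnv0 Δ' tyBotF hv).1
                    have hv'' : TypF (Δ' ++ Γ₁) v' (.arr tyN tyO0) := bot_inst hv't _
                    refine ⟨⟨tyO0, .refl _, Or.inr rfl⟩,
                      ⟨.app v' delta, ?_, .app hv'' (delta_typF _), ?_, .appR .refl⟩⟩
                    · exact isNormal_app_intro hv'n delta_normal
                        (hv'nl hvNotLam (by rw [hlen]; exact hvHead))
                    · intro k hk hf
                      cases hf with
                      | inl hf => exact hv'f k (by rw [hlen]; exact hk) hf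
                      | inr hf => exact delta_closed k hf
                | cons P Ps' =>
                    rw [mkArr_cons] at hPsE
                    injection hPsE with hC hW₂
                    subst hC; subst hW₂
                    refine ⟨⟨mkArr Ps' tyN, .refl _,
                        Or.inl ⟨Ps', rfl, (arr_closed_inv hScl).2⟩⟩,
                      ⟨canon Ps', canon_normal Ps', canon_typF Ps' _,
                        fun k _ => canon_closed Ps' k, canon_sub_delta Ps'⟩⟩
            | inr hO => cases hO
        | @gen Γi ui vi A hprev ihg =>
            intro hszu0 hszv0 hnu0 hnv0 hnl0 Δ' heq hlen hhv
            subst heq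
            have hmap : (Δ' ++ Γ₁).map (liftTy 1 0) = (Δ'.map (liftTy 1 0)) ++ Γ₁ := by
              rw [List.map_append, hmapΓ]
            obtain ⟨⟨S, hcloS, hdty⟩, ⟨a₀, hn0, ht0, hf0, hs0⟩⟩ :=
              ihg hszu0 hszv0 hnu0 hnv0 hnl0 (Δ'.map (liftTy 1 0)) hmap
                (by rw [List.length_map]; exact hlen) hhv
            refine ⟨⟨S, .step ?_, hdty⟩, ⟨a₀, hn0, .allI ht0, hf0, hs0⟩⟩
            rw [lift_closed (dtyS_closed hdty) 1 0]
            exact hcloS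
        | @inst Γi ui vi A G hprev ihg =>
            intro hszu0 hszv0 hnu0 hnv0 hnl0 Δ' heq hlen hhv
            obtain ⟨⟨S, hcloS, hdty⟩, ⟨a₀, hn0, ht0, hf0, hs0⟩⟩ :=
              ihg hszu0 hszv0 hnu0 hnv0 hnl0 Δ' heq hlen hhv
            exact ⟨⟨S, clo_inst (dtyS_notAll hdty) hcloS G, hdty⟩,
              ⟨a₀, hn0, .allE G ht0, hf0, hs0⟩⟩
      by_cases hh : headVar u < Δ.length
      · -- head is a Δ-variable : recurse structurally
        have main : ∀ u0 v0 Γt W', AppTy Γt u0 v0 W' →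
            sizeOf u0 < N → sizeOf v0 < N → IsNormal u0 → IsNormal v0 → NotLam u0 →
            headVar u0 < Δ.length →
            ∀ Δ', Γt = Δ' ++ Γ₁ → Δ'.length = Δ.length →
            ∃ a', IsNormal a' ∧ TypF Γt a' W'
              ∧ (∀ k, Δ.length ≤ k → ¬ FreeIn k a')
              ∧ ((∃ k, Δ.length ≤ k ∧ FreeIn k (Trm.app u0 v0)) → Sub delta a')
              ∧ ((∀ k, Δ.length ≤ k → ¬ FreeIn k (Trm.app u0 v0)) → a' = Trm.app u0 v0)
              ∧ NotLam a' := by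
          intro u0 v0 Γt W' h
          induction h with
          | @base Γi ui vi C W₂ hu hv =>
              intro hszu0 hszv0 hnu0 hnv0 hnl0 hh0 Δ' heq hlen
              subst heq
              obtain ⟨u', hu'n, hu't, hu'f, hu's, hu'e, hu'nl⟩ :=
                (ih ui hszu0 hnu0 Δ' (.arr C W₂) hu).1
              obtain ⟨v', hv'n, hv't, hv'f, hv's, hv'e, _⟩ :=
                (ih vi hszv0 hnv0 Δ' C hv).1
              have hu'notlam : NotLam u' := hu'nl hnl0 (by rw [hlen]; exact hh0)
              refine ⟨.app u' v', isNormal_app_intro hu'n hv'n hu'notlam,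
                .app hu't hv't, ?_, ?_, ?_, fun b hb => by cases hb⟩
              · intro k hk hf
                cases hf with
                | inl hf => exact hu'f k (by rw [hlen]; exact hk) hf
                | inr hf => exact hv'f k (by rw [hlen]; exact hk) hf
              · rintro ⟨k, hk, hf⟩
                cases hf with
                | inl hf => exact .appL (hu's ⟨k, by rw [hlen]; exact hk, hf⟩)
                | inr hf => exact .appR (hv's ⟨k, by rw [hlen]; exact hk, hf⟩)
              · intro h2
                have h2u : u' = ui := hu'e (fun k hk hf =>
                  h2 k (by rw [← hlen]; exact hk) (Or.inl hf))
                have h2v : v' = vi := hv'e (fun k hk hf =>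
                  h2 k (by rw [← hlen]; exact hk) (Or.inr hf))
                rw [h2u, h2v]
          | @gen Γi ui vi A hprev ihg =>
              intro hszu0 hszv0 hnu0 hnv0 hnl0 hh0 Δ' heq hlen
              subst heq
              have hmap : (Δ' ++ Γ₁).map (liftTy 1 0) = (Δ'.map (liftTy 1 0)) ++ Γ₁ := by
                rw [List.map_append, hmapΓ]
              obtain ⟨a', h1, h2, h3, h4, h5, h6⟩ :=
                ihg hszu0 hszv0 hnu0 hnv0 hnl0 hh0 (Δ'.map (liftTy 1 0)) hmap
                  (by rw [List.length_map]; exact hlen)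
              exact ⟨a', h1, .allI h2, h3, h4, h5, h6⟩
          | @inst Γi ui vi A G hprev ihg =>
              intro hszu0 hszv0 hnu0 hnv0 hnl0 hh0 Δ' heq hlen
              obtain ⟨a', h1, h2, h3, h4, h5, h6⟩ :=
                ihg hszu0 hszv0 hnu0 hnv0 hnl0 hh0 Δ' heq hlen
              exact ⟨a', h1, .allE G h2, h3, h4, h5, h6⟩
        obtain ⟨a', h1, h2, h3, h4, h5, h6⟩ :=
          main u v _ _ happ hszu hszv hnu hnv hnl hh Δ rfl rfl
        refine ⟨⟨a', h1, h2, h3, h4, h5, fun _ _ => h6⟩, ?_⟩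
        intro _ hge
        exfalso
        simp only [headVar] at hge
        omega
      · push_neg at hh
        have hpsi := psi u v _ _ happ hszu hszv hnu hnv hnl Δ rfl rfl hh
        obtain ⟨hS, ⟨a₀, hn0, ht0, hf0, hs0⟩⟩ := hpsi
        refine ⟨⟨a₀, hn0, ht0, hf0, fun _ => hs0, ?_, ?_⟩,
          fun _ _ => ⟨hS, ⟨a₀, hn0, ht0, hf0, hs0⟩⟩⟩
        · intro h2
          exfalso
          have hfu : FreeIn (headVar u) u := headVar_free u hnu hnl
          exact h2 (headVar u) hh (Or.inl hfu)
        · intro _ hlt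
          exfalso
          simp only [headVar] at hlt
          omega
/-! ### Section 8: input components -/

lemma sufTy_subst_dtyE {d : ℕ} {T : Ty} (h : SufTy d T) :
    DTyE (substTy T d tyN) := by
  obtain ⟨Ps, rfl, hPs⟩ := h
  rw [mkArr_subst]
  have htail : substTy (.var d) d tyN = tyN := by
    simp only [substTy, if_neg (by omega : ¬ d < d), if_pos rfl]
    exact lift_closed tyN_closed d 0
  rw [htail]
  refine ⟨Ps.map (fun P => substTy P d tyN), rfl, ?_⟩
  refine mkArr_closed _ _ ?_ tyN_closed
  intro P hP
  rw [List.mem_map] at hP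
  obtain ⟨P₀, hP₀, rfl⟩ := hP
  cases hPs P₀ hP₀ with
  | inl h =>
      subst h
      rw [htail]
      exact tyN_closed
  | inr h =>
      rw [subst_closed h.1]
      exact h.1

lemma input_component {C : Ty} (hC : InputCls C) {Γ : List Ty} {d : ℕ} (hΓ : CtxOK d Γ)
    {v : Trm} (hn : IsNormal v) (hty : TypF Γ v C) : TypF0 Γ v C := by
  by_cases hfree : ∃ k, FreeIn k v
  · exfalso
    -- substitute the head variable X := tyN and apply surgery
    have hty2 : TypF (Γ.map (fun B => substTy B d tyN)) v C := by
      have := typF_subst hty d tyN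
      rw [subst_closed hC.1] at this
      exact this
    set Γ₂ := Γ.map (fun B => substTy B d tyN) with hΓ₂def
    have hΓ₂ : ∀ E ∈ Γ₂, DTyE E := by
      intro E hE
      rw [hΓ₂def, List.mem_map] at hE
      obtain ⟨T, hT, rfl⟩ := hE
      exact sufTy_subst_dtyE (hΓ T hT)
    obtain ⟨k, hk⟩ := hfree
    have hsur := (sur Γ₂ hΓ₂ (sizeOf v + 1) v (by omega) hn [] C (by simpa using hty2)).1
    obtain ⟨a', h1, h2, h3, h4, _, _⟩ := hsur
    have hsub : Sub delta a' := h4 ⟨k, by simp, hk⟩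
    have h2' : TypF ([] ++ Γ₂) a' C := h2
    have hstr : TypF [] a' C := typF_strengthen h2' (fun k hf => absurd hf (h3 k (by simp)))
    have h0 : TypF0 [] a' C := hC.2 a' h1 hstr
    obtain ⟨Γ', W', hd⟩ := sub_typF0 hsub h0
    exact noF0_delta Γ' W' hd
  · push_neg at hfree
    have hstr : TypF [] v C := by
      refine typF_strengthen (Δ := []) (Γ := Γ) hty ?_
      intro k hf
      exact absurd hf (hfree k)
    have h0 : TypF0 [] v C := hC.2 v hn hstr
    refine typF0_mono h0 Γ ?_
    intro n B hB
    simp at hB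
/-! ### Section 9: main reconstruction -/

theorem recMain : ∀ (N : ℕ) (t : Trm), sizeOf t < N → IsNormal t →
    ∀ (Γ : List Ty) (d : ℕ) (W : Ty), CtxOK d Γ → TypF Γ t W →
    ((∃ Ts, W = mkArr Ts (Ty.var d) ∧ ∀ T ∈ Ts, SufTy d T) → TypF0 Γ t W)
    ∧ (NotLam t → ∃ S, Clo S W ∧ SufTy d S ∧ TypF0 Γ t S) := by
  intro N
  induction N with
  | zero => intro t h; omega
  | succ N ih =>
    intro t hsz hnorm Γ d W hΓ hty
    cases t with
    | var n =>
      obtain ⟨A, hA, hR⟩ := (typF_inv hty).1 n rfl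
      have hsufA : SufTy d A := hΓ A (mem_of_getElem? hA)
      have hclo : Clo A W := reach_clo (sufTy_notAll hsufA) hR
      have hvar : TypF0 Γ (.var n) A := .var _ _ _ hA
      refine ⟨?_, fun _ => ⟨A, hclo, hsufA, hvar⟩⟩
      rintro ⟨Ts, rfl, hTs⟩
      have hAW : A = mkArr Ts (Ty.var d) := by
        cases Ts with
        | nil => exact clo_var_inv hclo rfl
        | cons T Ts' => exact clo_arr_inv hclo rfl
      rw [← hAW]
      exact hvar
    | lam b =>
      have hnb : IsNormal b := isNormal_lam_iff.mp hnorm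
      have hszb : sizeOf b < N := by have := sizeOf_lam_body b; omega
      have hlam : LamTy Γ b W := (typF_inv hty).2.2 b rfl
      refine ⟨?_, fun hnl => absurd rfl (hnl b)⟩
      rintro ⟨Ts, rfl, hTs⟩
      cases Ts with
      | nil => cases hlam
      | cons T Ts' =>
          rw [mkArr_cons] at hlam ⊢
          cases hlam with
          | base hb =>
              have hΓ' : CtxOK d (T :: Γ) := by
                intro T' hT'
                cases hT' with
                | head => exact hTs T (by simp)
                | tail _ h => exact hΓ T' h
              refine .abs ?_
              exact (ih b hszb hnb (T :: Γ) d _ hΓ' hb).1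
                ⟨Ts', rfl, fun Q hQ => hTs Q (by simp [hQ])⟩
    | app u v =>
      obtain ⟨hnu, hnv, hnl⟩ := isNormal_app_inv hnorm
      have hszu : sizeOf u < N := by have := sizeOf_app_left u v; omega
      have hszv : sizeOf v < N := by have := sizeOf_app_right u v; omega
      have happ : AppTy Γ u v W := (typF_inv hty).2.1 u v rfl
      have spine : ∀ u0 v0 Γt W', AppTy Γt u0 v0 W' → sizeOf u0 < N → sizeOf v0 < N →
          IsNormal u0 → IsNormal v0 → NotLam u0 →
          ∀ d', CtxOK d' Γt →
          ∃ S, Clo S W' ∧ SufTy d' S ∧ TypF0 Γt (.app u0 v0) S := by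
        intro u0 v0 Γt W' h
        induction h with
        | @base Γi ui vi C W₂ hu hv =>
            intro hszu0 hszv0 hnu0 hnv0 hnl0 d' hCtx
            obtain ⟨Su, hcloU, hsufU, htyU⟩ :=
              (ih ui hszu0 hnu0 Γi d' (.arr C W₂) hCtx hu).2 hnl0
            have hSeq : Su = .arr C W₂ := clo_arr_inv hcloU rfl
            subst hSeq
            obtain ⟨Ps, hPs, hPrem⟩ := hsufU
            cases Ps with
            | nil => cases hPs
            | cons P Ps' =>
                rw [mkArr_cons] at hPs
                injection hPs with hC hW₂
                subst hC; subst hW₂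
                have hvty : TypF0 Γi vi C := by
                  cases hPrem C (by simp) with
                  | inl h =>
                      subst h
                      exact (ih vi hszv0 hnv0 Γi d' (.var d') hCtx hv).1 ⟨[], rfl, by simp⟩
                  | inr h => exact input_component h hCtx hnv0 hv
                exact ⟨mkArr Ps' (.var d'), .refl _,
                  ⟨Ps', rfl, fun Q hQ => hPrem Q (by simp [hQ])⟩, .app htyU hvty⟩
        | @gen Γi ui vi A hprev ihg =>
            intro hszu0 hszv0 hnu0 hnv0 hnl0 d' hCtx
            obtain ⟨S₁, hclo, hsuf, hty0⟩ :=
              ihg hszu0 hszv0 hnu0 hnv0 hnl0 (d'+1) (ctxOK_lift hCtx)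
            obtain ⟨S₀, rfl, hsuf₀⟩ := sufTy_unlift hsuf
            exact ⟨S₀, .step hclo, hsuf₀, typF0_unlift hty0⟩
        | @inst Γi ui vi A G hprev ihg =>
            intro hszu0 hszv0 hnu0 hnv0 hnl0 d' hCtx
            obtain ⟨S, hclo, hsuf, hty0⟩ := ihg hszu0 hszv0 hnu0 hnv0 hnl0 d' hCtx
            exact ⟨S, clo_inst (sufTy_notAll hsuf) hclo G, hsuf, hty0⟩
      have hsp := spine u v Γ W happ hszu hszv hnu hnv hnl d hΓ
      refine ⟨?_, fun _ => hsp⟩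
      rintro ⟨Ts, rfl, hTs⟩
      obtain ⟨S, hclo, hsuf, hty0⟩ := hsp
      have hSW : S = mkArr Ts (Ty.var d) := by
        cases Ts with
        | nil => exact clo_var_inv hclo rfl
        | cons T Ts' => exact clo_arr_inv hclo rfl
      rw [← hSW]
      exact hty0
/-! ### Section 10: assembly -/

lemma main_general (Us : List Ty) (hUs : ∀ U ∈ Us, SufTy 0 U) :
    ∀ t, IsNormal t → TypF [] t (.all (mkArr Us (.var 0))) →
      TypF0 [] t (.all (mkArr Us (.var 0))) := by
  intro t hnorm hty
  cases t with
  | var n =>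
      obtain ⟨A, hA, _⟩ := (typF_inv hty).1 n rfl
      simp at hA
  | app u v =>
      have hnl : NotLam (Trm.app u v) := fun b h => by cases h
      have := typF_free_bound hty (headVar (.app u v)) (headVar_free _ hnorm hnl)
      simp at this
  | lam b =>
      have hnb : IsNormal b := isNormal_lam_iff.mp hnorm
      have hlam : LamTy [] b (.all (mkArr Us (.var 0))) := (typF_inv hty).2.2 b rfl
      cases hlam with
      | gen h0 =>
          simp only [List.map_nil] at h0
          cases hUsc : Us with
          | nil =>
              subst hUsc
              cases h0
          | cons U Us' =>
              subst hUsc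
              rw [mkArr_cons] at h0 ⊢
              cases h0 with
              | base hb =>
                  have hctx : CtxOK 0 [U] := by
                    intro T hT
                    cases hT with
                    | head => exact hUs U (by simp)
                    | tail _ h => cases h
                  have h1 : TypF0 [U] b (mkArr Us' (.var 0)) :=
                    (recMain (sizeOf b + 1) b (by omega) hnb [U] 0 _ hctx hb).1
                      ⟨Us', rfl, fun Q hQ => hUs Q (by simp [hQ])⟩
                  exact .allI (.abs h1)

theorem input_and (A B : Ty) (hA : IsInputType A) (hB : IsInputType B) :
    IsInputType (tyAnd A B) := by
  obtain ⟨hAc, hAi⟩ := hA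
  obtain ⟨hBc, hBi⟩ := hB
  have e1 : tyAnd A B = .all (mkArr [.arr A (.arr B (.var 0))] (.var 0)) := by
    rw [tyAnd, lift_closed hAc 1 0, lift_closed hBc 1 0]
    rfl
  constructor
  · intro k hk
    rw [e1] at hk
    simp only [TyFreeIn, mkArr, List.foldr] at hk
    rcases hk with ((h | (h | h)) | h)
    · exact hAc _ h
    · exact hBc _ h
    · omega
    · omega
  · intro t hn ht
    rw [e1] at ht ⊢
    refine main_general _ ?_ t hn ht
    intro U hU
    simp only [List.mem_singleton] at hU
    subst hU
    refine ⟨[A, B], rfl, ?_⟩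
    intro P hP
    simp only [List.mem_cons, List.not_mem_nil, or_false] at hP
    rcases hP with rfl | rfl
    · right; exact ⟨hAc, hAi⟩
    · right; exact ⟨hBc, hBi⟩

theorem input_or (A B : Ty) (hA : IsInputType A) (hB : IsInputType B) :
    IsInputType (tyOr A B) := by
  obtain ⟨hAc, hAi⟩ := hA
  obtain ⟨hBc, hBi⟩ := hB
  have e1 : tyOr A B = .all (mkArr [.arr A (.var 0), .arr B (.var 0)] (.var 0)) := by
    rw [tyOr, lift_closed hAc 1 0, lift_closed hBc 1 0]
    rfl
  constructor
  · intro k hk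
    rw [e1] at hk
    simp only [TyFreeIn, mkArr, List.foldr] at hk
    rcases hk with ((h | h) | ((h | h) | h))
    · exact hAc _ h
    · omega
    · exact hBc _ h
    · omega
    · omega
  · intro t hn ht
    rw [e1] at ht ⊢
    refine main_general _ ?_ t hn ht
    intro U hU
    simp only [List.mem_cons, List.not_mem_nil, or_false] at hU
    rcases hU with rfl | rfl
    · refine ⟨[A], rfl, ?_⟩
      intro P hP
      simp only [List.mem_singleton] at hP
      subst hP
      right; exact ⟨hAc, hAi⟩
    · refine ⟨[B], rfl, ?_⟩
      intro P hP
      simp only [List.mem_singleton] at hP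
      subst hP
      right; exact ⟨hBc, hBi⟩

theorem input_list (A : Ty) (hA : IsInputType A) : IsInputType (tyList A) := by
  obtain ⟨hAc, hAi⟩ := hA
  have e1 : tyList A = .all (mkArr [.var 0, .arr A (.arr (.var 0) (.var 0))] (.var 0)) := by
    rw [tyList, lift_closed hAc 1 0]
    rfl
  constructor
  · intro k hk
    rw [e1] at hk
    simp only [TyFreeIn, mkArr, List.foldr] at hk
    rcases hk with (h | ((h | (h | h)) | h))
    · omega
    · exact hAc _ h
    · omega
    · omega
    · omega
  · intro t hn ht
    rw [e1] at ht ⊢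
    refine main_general _ ?_ t hn ht
    intro U hU
    simp only [List.mem_cons, List.not_mem_nil, or_false] at hU
    rcases hU with rfl | rfl
    · exact ⟨[], rfl, by simp⟩
    · refine ⟨[A, .var 0], rfl, ?_⟩
      intro P hP
      simp only [List.mem_cons, List.not_mem_nil, or_false] at hP
      rcases hP with rfl | rfl
      · right; exact ⟨hAc, hAi⟩
      · left; rfl

/-- if `A` and `B` are input types, then `A ∧ B`, `A ∨ B`
and `LA` are input types. -/
theorem input_closed_under_and_or_list (A B : Ty)
    (hA : IsInputType A) (hB : IsInputType B) :
    IsInputType (tyAnd A B) ∧ IsInputType (tyOr A B) ∧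
      IsInputType (tyList A) :=
  ⟨input_and A B hA hB, input_or A B hA hB, input_list A hA⟩

end FarkhNour
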